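/- Given the adaptation law θ̃̇ = −Γ(Yᵀη + (ξ + δ)Pθ̃) with Γ symmetric positive definite, P(t) ⪰ κ₀ I, δ > 0, and ξ(t) = α‖Y(t)ᵀη(t)‖/κ₀ with α > 0, the function V(t) = ½ θ̃ᵀ Γ⁻¹ θ̃ satisfies V̇ ≤ (1 − α‖θ̃‖)‖Yᵀη‖‖θ̃‖ − δκ₀‖θ̃‖², hence V̇ < 0 whenever ‖θ̃(t)‖ > 1/α. -/

import Mathlib

open Matrix

/-- Euclidean norm of a vector in `Fin k → ℝ`. -/
noncomputable def euclNorm {k : ℕ} (x : Fin k → ℝ) : ℝ := Real.sqrt (x ⬝ᵥ x)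

lemma euclNorm_nonneg' {k : ℕ} (x : Fin k → ℝ) : 0 ≤ euclNorm x := Real.sqrt_nonneg _

lemma dot_self_nonneg {k : ℕ} (x : Fin k → ℝ) : 0 ≤ x ⬝ᵥ x := by
  unfold dotProduct
  exact Finset.sum_nonneg fun i _ => mul_self_nonneg _

lemma euclNorm_sq {k : ℕ} (x : Fin k → ℝ) : (euclNorm x) ^ 2 = x ⬝ᵥ x := by
  unfold euclNorm
  exact Real.sq_sqrt (dot_self_nonneg x)

lemma cauchy_dot {k : ℕ} (x y : Fin k → ℝ) : x ⬝ᵥ y ≤ euclNorm x * euclNorm y := by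
  have h2 : (x ⬝ᵥ y) ^ 2 ≤ (x ⬝ᵥ x) * (y ⬝ᵥ y) := by
    simpa [dotProduct, mul_pow, pow_two] using
      Finset.sum_mul_sq_le_sq_mul_sq Finset.univ x y
  have := Real.sqrt_le_sqrt h2
  calc x ⬝ᵥ y ≤ |x ⬝ᵥ y| := le_abs_self _
    _ = Real.sqrt ((x ⬝ᵥ y) ^ 2) := (Real.sqrt_sq_eq_abs _).symm
    _ ≤ Real.sqrt ((x ⬝ᵥ x) * (y ⬝ᵥ y)) := this
    _ = euclNorm x * euclNorm y := Real.sqrt_mul (dot_self_nonneg x) _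

/-- For the composite adaptation law θ̃̇ = −Γ(Yᵀη + (ξ+δ)Pθ̃) with P ⪰ κ₀I and
ξ = α‖Yᵀη‖/κ₀, the function V = ½θ̃ᵀΓ⁻¹θ̃ satisfies
V̇ ≤ (1 − α‖θ̃‖)‖Yᵀη‖‖θ̃‖ − δκ₀‖θ̃‖², hence V̇ < 0 whenever ‖θ̃‖ > 1/α. -/
theorem stmt7 {n nθ : ℕ} (Γ : Matrix (Fin nθ) (Fin nθ) ℝ)
    (hΓsym : Γ.IsSymm) (hΓpd : Γ.PosDef)
    (Y : ℝ → Matrix (Fin n) (Fin nθ) ℝ) (η : ℝ → (Fin n → ℝ))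
    (P : ℝ → Matrix (Fin nθ) (Fin nθ) ℝ)
    (hPsym : ∀ t : ℝ, (P t).IsSymm)
    (κ₀ δ α : ℝ) (hκ₀ : 0 < κ₀) (hδ : 0 < δ) (hα : 0 < α)
    (hP : ∀ t : ℝ, ((P t) - κ₀ • (1 : Matrix (Fin nθ) (Fin nθ) ℝ)).PosSemidef)
    (ξ : ℝ → ℝ) (hξ : ∀ t : ℝ, ξ t = α * euclNorm ((Y t)ᵀ.mulVec (η t)) / κ₀)
    (θtil : ℝ → (Fin nθ → ℝ))
    (hθtil : ∀ t : ℝ, ∀ i, HasDerivAt (fun s => θtil s i)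
      ((-(Γ.mulVec ((Y t)ᵀ.mulVec (η t) + (ξ t + δ) • (P t).mulVec (θtil t)))) i) t) :
    ∀ t : ℝ, ∀ D : ℝ,
      HasDerivAt (fun s => (1 / 2 : ℝ) * ((θtil s) ⬝ᵥ Γ⁻¹.mulVec (θtil s))) D t →
      D ≤ (1 - α * euclNorm (θtil t)) * euclNorm ((Y t)ᵀ.mulVec (η t)) * euclNorm (θtil t)
          - δ * κ₀ * (euclNorm (θtil t)) ^ 2 ∧
      (1 / α < euclNorm (θtil t) → D < 0) := by
  intro t D hD
  set θ := θtil t with hθdef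
  set Yη := (Y t)ᵀ.mulVec (η t) with hYηdef
  set v : Fin nθ → ℝ := Yη + (ξ t + δ) • (P t).mulVec θ with hvdef
  set θ' : Fin nθ → ℝ := -(Γ.mulVec v) with hθ'def
  -- derivative of each coordinate of Γ⁻¹ *ᵥ θtil
  have h1 : ∀ i, HasDerivAt (fun s => (Γ⁻¹.mulVec (θtil s)) i) ((Γ⁻¹.mulVec θ') i) t := by
    intro i
    simp only [Matrix.mulVec, dotProduct]
    exact HasDerivAt.fun_sum (fun j _ => ((hθtil t j).const_mul (Γ⁻¹ i j)))
  have hdot : HasDerivAt (fun s => (θtil s) ⬝ᵥ Γ⁻¹.mulVec (θtil s))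
      (θ' ⬝ᵥ Γ⁻¹.mulVec θ + θ ⬝ᵥ Γ⁻¹.mulVec θ') t := by
    have hsum := HasDerivAt.fun_sum (fun i (_ : i ∈ Finset.univ) => ((hθtil t i).mul (h1 i)))
    have heq : θ' ⬝ᵥ Γ⁻¹.mulVec θ + θ ⬝ᵥ Γ⁻¹.mulVec θ'
        = ∑ i : Fin nθ, (θ' i * (Γ⁻¹.mulVec θ) i + θ i * (Γ⁻¹.mulVec θ') i) := by
      simp [dotProduct, Finset.sum_add_distrib]
    rw [heq]
    exact hsum
  have hV : HasDerivAt (fun s => (1 / 2 : ℝ) * ((θtil s) ⬝ᵥ Γ⁻¹.mulVec (θtil s)))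
      ((1 / 2 : ℝ) * (θ' ⬝ᵥ Γ⁻¹.mulVec θ + θ ⬝ᵥ Γ⁻¹.mulVec θ')) t := hdot.const_mul _
  -- symmetry of Γ⁻¹
  have hinv_symm : Γ⁻¹ᵀ = Γ⁻¹ := by
    rw [Matrix.transpose_nonsing_inv, hΓsym.eq]
  have hvm : θ' ᵥ* Γ⁻¹ = Γ⁻¹.mulVec θ' := by
    nth_rewrite 1 [← hinv_symm]
    exact Matrix.vecMul_transpose _ _
  have hswap : θ' ⬝ᵥ Γ⁻¹.mulVec θ = θ ⬝ᵥ Γ⁻¹.mulVec θ' := by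
    rw [dotProduct_mulVec, hvm, dotProduct_comm]
  -- identify D
  have hΓunit : IsUnit Γ.det := isUnit_iff_ne_zero.mpr (ne_of_gt hΓpd.det_pos)
  have hinvmul : Γ⁻¹.mulVec θ' = -v := by
    rw [hθ'def, Matrix.mulVec_neg, Matrix.mulVec_mulVec, Matrix.nonsing_inv_mul Γ hΓunit,
      Matrix.one_mulVec]
  have hDval : D = -(θ ⬝ᵥ Yη) - (ξ t + δ) * (θ ⬝ᵥ (P t).mulVec θ) := by
    have hu := hD.unique hV
    rw [hu, hswap, hinvmul]
    simp [hvdef, dotProduct_add, dotProduct_smul, smul_eq_mul]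
    ring
  -- bounds
  have hcs : -(θ ⬝ᵥ Yη) ≤ euclNorm θ * euclNorm Yη := by
    have := cauchy_dot (-θ) Yη
    have hne : euclNorm (-θ) = euclNorm θ := by unfold euclNorm; simp
    simpa [hne] using this
  have hquad : κ₀ * (euclNorm θ) ^ 2 ≤ θ ⬝ᵥ (P t).mulVec θ := by
    have h0 : 0 ≤ θ ⬝ᵥ (((P t) - κ₀ • (1 : Matrix (Fin nθ) (Fin nθ) ℝ)).mulVec θ) := by
      have := (hP t).re_dotProduct_nonneg θ
      simpa using this
    have hexp : θ ⬝ᵥ (((P t) - κ₀ • (1 : Matrix (Fin nθ) (Fin nθ) ℝ)).mulVec θ)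
        = θ ⬝ᵥ (P t).mulVec θ - κ₀ * (θ ⬝ᵥ θ) := by
      rw [Matrix.sub_mulVec, dotProduct_sub, Matrix.smul_mulVec,
        Matrix.one_mulVec, dotProduct_smul, smul_eq_mul]
    rw [hexp] at h0
    rw [euclNorm_sq]
    linarith
  have hξpos : 0 < ξ t + δ := by
    have : 0 ≤ ξ t := by
      rw [hξ t]
      exact div_nonneg (mul_nonneg hα.le (euclNorm_nonneg' _)) hκ₀.le
    linarith
  have hE := euclNorm_nonneg' θ
  have hN := euclNorm_nonneg' Yη
  have hξval : ξ t * κ₀ = α * euclNorm Yη := by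
    rw [hξ t]; field_simp; rfl
  have hmain : D ≤ (1 - α * euclNorm θ) * euclNorm Yη * euclNorm θ - δ * κ₀ * (euclNorm θ) ^ 2 := by
    rw [hDval]
    nlinarith [mul_le_mul_of_nonneg_left hquad (le_of_lt hξpos), hξpos, hcs, hξval,
      sq_nonneg (euclNorm θ), hκ₀.le]
  refine ⟨hmain, fun hgt => ?_⟩
  have hEpos : 0 < euclNorm θ := lt_trans (by positivity) hgt
  have h1α : 1 - α * euclNorm θ < 0 := by
    have := (div_lt_iff₀ hα).mp hgt
    nlinarith
  have : (1 - α * euclNorm θ) * euclNorm Yη * euclNorm θ ≤ 0 := by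
    apply mul_nonpos_of_nonpos_of_nonneg _ hE
    exact mul_nonpos_of_nonpos_of_nonneg h1α.le hN
  have hpos : 0 < δ * κ₀ * (euclNorm θ) ^ 2 := by positivity
  linarith
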